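/- Let H be a central arrangement and F a nonempty flat. Writing S(H) = R[I]/(J_H + Q_I), there is a ring isomorphism R[I]/(J_H + J_{H^F} + Q_I) ≅ S(H^F) ⊗_R S(H_F), obtained from the ideal identity J_H + J_{H^F} + Q_I = J_{H_F} + J_{H^F} + Q_I and the fact that J_{H_F} involves only variables e_i with i ∈ F while J_{H^F} involves only variables with i ∉ F. -/

import Mathlib

open MvPolynomial
open scoped TensorProduct
set_option synthInstance.maxHeartbeats 1000000

variable {I : Type} [Fintype I] [DecidableEq I]

noncomputable def coordOn (V : Submodule ℝ (I → ℝ)) (i : I) : V →ₗ[ℝ] ℝ :=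
  (LinearMap.proj i).comp V.subtype

/-- The element `∑_{i ∈ I₀} a_i e_{I₀∖{i}}` in variables indexed by `σ`. -/
noncomputable def relElem {σ : Type} [DecidableEq σ] (I₀ : Finset σ) (a : σ → ℝ) :
    MvPolynomial σ ℝ :=
  ∑ i ∈ I₀, a i • ∏ j ∈ I₀.erase i, (X j : MvPolynomial σ ℝ)

noncomputable def coordKer (F : Finset I) : Submodule ℝ (I → ℝ) :=
  ⨅ i ∈ F, LinearMap.ker (LinearMap.proj (R := ℝ) (φ := fun _ : I => ℝ) i)

noncomputable def JH (V : Submodule ℝ (I → ℝ)) : Ideal (MvPolynomial I ℝ) :=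
  Ideal.span {p | ∃ (I₀ : Finset I) (a : I → ℝ),
    (∑ i ∈ I₀, a i • coordOn V i) = 0 ∧ p = relElem I₀ a}

noncomputable def JresI (V : Submodule ℝ (I → ℝ)) (F : Finset I) :
    Ideal (MvPolynomial I ℝ) :=
  Ideal.span {p | ∃ (I₀ : Finset I) (a : I → ℝ), Disjoint I₀ F ∧
    (∑ i ∈ I₀, a i • coordOn (V ⊓ coordKer F) i) = 0 ∧ p = relElem I₀ a}

/-- `Q_I`: the ideal generated by all squares `e_i²`. -/
noncomputable def Qall : Ideal (MvPolynomial I ℝ) :=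
  Ideal.span {p | ∃ i : I, p = (X i : MvPolynomial I ℝ) ^ 2}

/-- `S(H_F)`: the quotient `ℝ[e_i : i ∈ F]/(J_{H_F} + Q_F)` for the (central)
localization of the arrangement at `F`. -/
noncomputable def SLocIdeal (V : Submodule ℝ (I → ℝ)) (F : Finset I) :
    Ideal (MvPolynomial {i : I // i ∈ F} ℝ) :=
  Ideal.span ({p | ∃ (I₀ : Finset {i : I // i ∈ F}) (a : {i : I // i ∈ F} → ℝ),
      (∑ i ∈ I₀, a i • coordOn V (i : I)) = 0 ∧ p = relElem I₀ a} ∪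
    {p | ∃ i : {i : I // i ∈ F}, p = (X i : MvPolynomial {i : I // i ∈ F} ℝ) ^ 2})

/-- `S(H^F)`: the quotient `ℝ[e_i : i ∉ F]/(J_{H^F} + Q_{I∖F})` for the restriction
of the arrangement to the flat `F`. -/
noncomputable def SResIdeal (V : Submodule ℝ (I → ℝ)) (F : Finset I) :
    Ideal (MvPolynomial {i : I // i ∉ F} ℝ) :=
  Ideal.span ({p | ∃ (I₀ : Finset {i : I // i ∉ F}) (a : {i : I // i ∉ F} → ℝ),
      (∑ i ∈ I₀, a i • coordOn (V ⊓ coordKer F) (i : I)) = 0 ∧ p = relElem I₀ a} ∪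
    {p | ∃ i : {i : I // i ∉ F}, p = (X i : MvPolynomial {i : I // i ∉ F} ℝ) ^ 2})

def IsFlatC (V : Submodule ℝ (I → ℝ)) (F : Finset I) : Prop :=
  ∃ x ∈ V, ∀ i : I, i ∈ F ↔ x i = 0


set_option linter.unusedSectionVars false

lemma mem_coordKer {F : Finset I} {v : I → ℝ} : v ∈ coordKer F ↔ ∀ i ∈ F, v i = 0 := by
  simp [coordKer, Submodule.mem_iInf, LinearMap.mem_ker, LinearMap.proj]

lemma relation_iff {W : Submodule ℝ (I → ℝ)} {I₀ : Finset I} {a : I → ℝ} :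
    (∑ i ∈ I₀, a i • coordOn W i) = 0 ↔ ∀ v ∈ W, ∑ i ∈ I₀, a i * v i = 0 := by
  rw [LinearMap.ext_iff]
  constructor
  · intro h v hv
    have := h ⟨v, hv⟩
    simpa [coordOn, LinearMap.proj] using this
  · intro h x
    simpa [coordOn, LinearMap.proj] using h x.1 x.2

lemma algHom_relElem {σ : Type} [DecidableEq σ] {R : Type*} [CommRing R] [Algebra ℝ R]
    {FC : Type*} [FunLike FC (MvPolynomial σ ℝ) R] [AlgHomClass FC ℝ (MvPolynomial σ ℝ) R]
    (ψ : FC) (I₀ : Finset σ) (a : σ → ℝ) :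
    ψ (relElem I₀ a) = ∑ i ∈ I₀, a i • ∏ j ∈ I₀.erase i, ψ (X j) := by
  simp [relElem, map_sum, map_prod]

noncomputable def Kloc (V : Submodule ℝ (I → ℝ)) (F : Finset I) : Ideal (MvPolynomial I ℝ) :=
  Ideal.span {p | ∃ (I₀ : Finset I) (a : I → ℝ), I₀ ⊆ F ∧
    (∑ i ∈ I₀, a i • coordOn V i) = 0 ∧ p = relElem I₀ a}

lemma relElem_split (I₀ : Finset I) (F : Finset I) (a : I → ℝ) :
    relElem I₀ a = (∏ j ∈ I₀ \ F, X j) * relElem (I₀ ∩ F) a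
      + (∏ j ∈ I₀ ∩ F, X j) * relElem (I₀ \ F) a := by
  unfold relElem
  rw [← Finset.sum_inter_add_sum_sdiff I₀ F (fun i => a i • ∏ j ∈ I₀.erase i, (X j : MvPolynomial I ℝ))]
  rw [Finset.mul_sum, Finset.mul_sum]
  congr 1
  · apply Finset.sum_congr rfl
    intro i hi
    have hiF : i ∈ I₀ ∧ i ∈ F := by simpa using hi
    have he : I₀.erase i = (I₀ \ F) ∪ (I₀ ∩ F).erase i := by
      ext x; simp only [Finset.mem_erase, Finset.mem_union, Finset.mem_sdiff, Finset.mem_inter]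
      constructor
      · rintro ⟨h1, h2⟩
        by_cases hx : x ∈ F
        · right; exact ⟨h1, h2, hx⟩
        · left; exact ⟨h2, hx⟩
      · rintro (⟨h1, h2⟩ | ⟨h1, h2, h3⟩)
        · exact ⟨fun h => h2 (h ▸ hiF.2), h1⟩
        · exact ⟨h1, h2⟩
    have hd : Disjoint (I₀ \ F) ((I₀ ∩ F).erase i) := by
      rw [Finset.disjoint_left]; intro x hx hx'
      simp only [Finset.mem_sdiff] at hx
      simp only [Finset.mem_erase, Finset.mem_inter] at hx'
      exact hx.2 hx'.2.2
    rw [he, Finset.prod_union hd, mul_smul_comm]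
  · apply Finset.sum_congr rfl
    intro i hi
    have hiF : i ∈ I₀ ∧ i ∉ F := by simpa using hi
    have he : I₀.erase i = (I₀ ∩ F) ∪ (I₀ \ F).erase i := by
      ext x; simp only [Finset.mem_erase, Finset.mem_union, Finset.mem_sdiff, Finset.mem_inter]
      constructor
      · rintro ⟨h1, h2⟩
        by_cases hx : x ∈ F
        · left; exact ⟨h2, hx⟩
        · right; exact ⟨h1, h2, hx⟩
      · rintro (⟨h1, h2⟩ | ⟨h1, h2, h3⟩)
        · exact ⟨fun h => hiF.2 (h ▸ h2), h1⟩
        · exact ⟨h1, h2⟩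
    have hd : Disjoint (I₀ ∩ F) ((I₀ \ F).erase i) := by
      rw [Finset.disjoint_left]; intro x hx hx'
      simp only [Finset.mem_inter] at hx
      simp only [Finset.mem_erase, Finset.mem_sdiff] at hx'
      exact hx'.2.2 hx.2
    rw [he, Finset.prod_union hd, mul_smul_comm]


lemma prodT_mem (V : Submodule ℝ (I → ℝ)) (F : Finset I) (T : Finset I) (a : I → ℝ)
    (hdisj : Disjoint T F)
    (hrelT : (∑ i ∈ T, a i • coordOn (V ⊓ coordKer F) i) = 0)
    (t : I) (ht : t ∈ T) (hat : a t ≠ 0) :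
    (∏ j ∈ T, (X j : MvPolynomial I ℝ)) ∈ JresI V F ⊔ Qall := by
  have hmemT : relElem T a ∈ JresI V F ⊔ Qall :=
    le_sup_left (α := Ideal (MvPolynomial I ℝ))
      (Ideal.subset_span ⟨T, a, hdisj, hrelT, rfl⟩)
  have key : X t * relElem T a = a t • ∏ j ∈ T, (X j : MvPolynomial I ℝ)
      + ∑ i ∈ T.erase t, a i • ((X t : MvPolynomial I ℝ) ^ 2 * ∏ j ∈ (T.erase i).erase t, X j) := by
    unfold relElem
    rw [Finset.mul_sum, ← Finset.add_sum_erase _ _ ht]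
    congr 1
    · rw [mul_smul_comm, Finset.mul_prod_erase _ _ ht]
    · apply Finset.sum_congr rfl
      intro i hi
      have hti : t ∈ T.erase i := by
        simp only [Finset.mem_erase] at hi ⊢
        exact ⟨fun h => hi.1 h.symm, ht⟩
      rw [mul_smul_comm, ← Finset.mul_prod_erase _ _ hti, pow_two]
      ring_nf
  have hsum : (∑ i ∈ T.erase t, a i • ((X t : MvPolynomial I ℝ) ^ 2 * ∏ j ∈ (T.erase i).erase t, X j))
      ∈ JresI V F ⊔ Qall := by
    apply Ideal.sum_mem
    intro i _
    apply Submodule.smul_of_tower_mem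
    apply le_sup_right (α := Ideal (MvPolynomial I ℝ))
    rw [mul_comm]
    exact Ideal.mul_mem_left _ _ (Ideal.subset_span ⟨t, rfl⟩)
  have h1 : a t • (∏ j ∈ T, (X j : MvPolynomial I ℝ)) ∈ JresI V F ⊔ Qall := by
    have : a t • (∏ j ∈ T, (X j : MvPolynomial I ℝ)) = X t * relElem T a
        - ∑ i ∈ T.erase t, a i • ((X t : MvPolynomial I ℝ) ^ 2 * ∏ j ∈ (T.erase i).erase t, X j) := by
      rw [key]; ring
    rw [this]
    exact Submodule.sub_mem _ (Ideal.mul_mem_left _ _ hmemT) hsum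
  have := Submodule.smul_of_tower_mem (JresI V F ⊔ Qall) (a t)⁻¹ h1
  rwa [inv_smul_smul₀ hat] at this

lemma key_ideal_eq (V : Submodule ℝ (I → ℝ)) (F : Finset I) :
    JH V ⊔ JresI V F ⊔ Qall = Kloc V F ⊔ JresI V F ⊔ Qall := by
  apply le_antisymm
  · rw [sup_le_iff, sup_le_iff]
    refine ⟨⟨?_, le_sup_of_le_left le_sup_right⟩, le_sup_right⟩
    rw [JH, Ideal.span_le]
    rintro p ⟨I₀, a, hrel, rfl⟩
    rw [SetLike.mem_coe, relElem_split I₀ F a]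
    set S := I₀ ∩ F with hS
    set T := I₀ \ F with hT
    have hdisj : Disjoint T F := Finset.sdiff_disjoint
    have hrel' : ∀ v ∈ V, ∑ i ∈ I₀, a i * v i = 0 := relation_iff.1 hrel
    have hrelT : (∑ i ∈ T, a i • coordOn (V ⊓ coordKer F) i) = 0 := by
      rw [relation_iff]
      intro v hv
      rw [Submodule.mem_inf] at hv
      have h0 : ∑ i ∈ I₀, a i * v i = 0 := hrel' v hv.1
      have hSz : ∀ i ∈ S, a i * v i = 0 := by
        intro i hi
        have : v i = 0 := mem_coordKer.1 hv.2 i (Finset.mem_inter.1 hi).2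
        rw [this, mul_zero]
      rw [← Finset.sum_inter_add_sum_sdiff I₀ F (fun i => a i * v i)] at h0
      rw [Finset.sum_eq_zero hSz] at h0
      simpa using h0
    have hmem2 : (∏ j ∈ S, (X j : MvPolynomial I ℝ)) * relElem T a ∈ Kloc V F ⊔ JresI V F ⊔ Qall := by
      apply Ideal.mul_mem_left
      have hx : relElem T a ∈ JresI V F := Ideal.subset_span ⟨T, a, hdisj, hrelT, rfl⟩
      exact SetLike.le_def.1 (le_sup_of_le_left le_sup_right) hx
    refine Submodule.add_mem _ ?_ hmem2
    by_cases hT0 : ∀ i ∈ T, a i = 0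
    · -- a vanishes on T, so a is a relation supported in S
      have hrelS : (∑ i ∈ S, a i • coordOn V i) = 0 := by
        rw [relation_iff]
        intro v hv
        have h0 := hrel' v hv
        rw [← Finset.sum_inter_add_sum_sdiff I₀ F (fun i => a i * v i)] at h0
        have hz : ∑ i ∈ I₀ \ F, a i * v i = 0 :=
          Finset.sum_eq_zero (fun i hi => by rw [hT0 i hi, zero_mul])
        rw [hz, add_zero] at h0
        exact h0
      apply Ideal.mul_mem_left
      have hx : relElem S a ∈ Kloc V F :=
        Ideal.subset_span ⟨S, a, Finset.inter_subset_right, hrelS, rfl⟩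
      exact SetLike.le_def.1 (le_sup_of_le_left le_sup_left) hx
    · push_neg at hT0
      obtain ⟨t, ht, hat⟩ := hT0
      rw [mul_comm]
      apply Ideal.mul_mem_left
      have := prodT_mem V F T a hdisj hrelT t ht hat
      revert this
      apply SetLike.le_def.1
      exact sup_le (le_sup_of_le_left le_sup_right) le_sup_right
  · rw [sup_le_iff, sup_le_iff]
    refine ⟨⟨?_, le_sup_of_le_left le_sup_right⟩, le_sup_right⟩
    apply le_sup_of_le_left
    apply le_sup_of_le_left
    rw [Kloc, JH, Ideal.span_le]
    rintro p ⟨I₀, a, _, hrel, rfl⟩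
    exact Ideal.subset_span ⟨I₀, a, hrel, rfl⟩


noncomputable def quotTensorQuot {A B : Type*} [CommRing A] [CommRing B] [Algebra ℝ A] [Algebra ℝ B]
    (Ia : Ideal A) (Ib : Ideal B) :
    ((A ⊗[ℝ] B) ⧸ (Ia.map (Algebra.TensorProduct.includeLeft : A →ₐ[ℝ] A ⊗[ℝ] B) ⊔
        Ib.map (Algebra.TensorProduct.includeRight : B →ₐ[ℝ] A ⊗[ℝ] B))) ≃ₐ[ℝ]
      ((A ⧸ Ia) ⊗[ℝ] (B ⧸ Ib)) := by
  set K : Ideal (A ⊗[ℝ] B) := (Ia.map (Algebra.TensorProduct.includeLeft : A →ₐ[ℝ] A ⊗[ℝ] B) ⊔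
        Ib.map (Algebra.TensorProduct.includeRight : B →ₐ[ℝ] A ⊗[ℝ] B)) with hK
  have hfwd : ∀ x ∈ K, (Algebra.TensorProduct.map (Ideal.Quotient.mkₐ ℝ Ia) (Ideal.Quotient.mkₐ ℝ Ib)) x = 0 := by
    rw [hK]
    intro x hx
    rw [← RingHom.mem_ker] at *
    revert x
    rw [← SetLike.le_def, sup_le_iff]
    constructor <;> rw [Ideal.map_le_iff_le_comap] <;> intro x hx <;>
      simp [RingHom.mem_ker, Ideal.Quotient.eq_zero_iff_mem.2 hx]
  refine AlgEquiv.ofAlgHom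
    (Ideal.Quotient.liftₐ K (Algebra.TensorProduct.map (Ideal.Quotient.mkₐ ℝ Ia) (Ideal.Quotient.mkₐ ℝ Ib)) hfwd)
    (Algebra.TensorProduct.lift
      (Ideal.Quotient.liftₐ Ia ((Ideal.Quotient.mkₐ ℝ K).comp Algebra.TensorProduct.includeLeft)
        (fun a ha => by
          simp only [AlgHom.comp_apply, Ideal.Quotient.mkₐ_eq_mk, Ideal.Quotient.eq_zero_iff_mem]
          exact hK ▸ Ideal.mem_sup_left (Ideal.mem_map_of_mem _ ha)))
      (Ideal.Quotient.liftₐ Ib ((Ideal.Quotient.mkₐ ℝ K).comp Algebra.TensorProduct.includeRight)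
        (fun b hb => by
          simp only [AlgHom.comp_apply, Ideal.Quotient.mkₐ_eq_mk, Ideal.Quotient.eq_zero_iff_mem]
          exact hK ▸ Ideal.mem_sup_right (Ideal.mem_map_of_mem _ hb)))
      (fun _ _ => Commute.all _ _)) ?_ ?_
  · apply Algebra.TensorProduct.ext
    · apply Ideal.Quotient.algHom_ext
      apply AlgHom.ext; intro a
      simp [Algebra.TensorProduct.lift_tmul, Ideal.Quotient.lift_mk] <;> rfl
    · apply Ideal.Quotient.algHom_ext
      apply AlgHom.ext; intro b
      simp [Algebra.TensorProduct.lift_tmul, Ideal.Quotient.lift_mk] <;> rfl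
  · apply Ideal.Quotient.algHom_ext
    apply Algebra.TensorProduct.ext
    · apply AlgHom.ext; intro a
      simp [Algebra.TensorProduct.lift_tmul, Ideal.Quotient.lift_mk]; erw [Ideal.Quotient.lift_mk]; simp [Algebra.TensorProduct.lift_tmul] <;> rfl
    · apply AlgHom.ext; intro b
      simp [Algebra.TensorProduct.lift_tmul, Ideal.Quotient.lift_mk]; erw [Ideal.Quotient.lift_mk]; simp [Algebra.TensorProduct.lift_tmul] <;> rfl

noncomputable def splitHom (F : Finset I) :
    MvPolynomial I ℝ →ₐ[ℝ] (MvPolynomial {i : I // i ∉ F} ℝ ⊗[ℝ] MvPolynomial {i : I // i ∈ F} ℝ) :=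
  aeval (fun i => if h : i ∈ F then (1 : MvPolynomial {i : I // i ∉ F} ℝ) ⊗ₜ X ⟨i, h⟩
    else X ⟨i, h⟩ ⊗ₜ (1 : MvPolynomial {i : I // i ∈ F} ℝ))

noncomputable def splitEquiv (F : Finset I) :
    MvPolynomial I ℝ ≃ₐ[ℝ] (MvPolynomial {i : I // i ∉ F} ℝ ⊗[ℝ] MvPolynomial {i : I // i ∈ F} ℝ) := by
  refine AlgEquiv.ofAlgHom (splitHom F)
    (Algebra.TensorProduct.lift (aeval (fun a => X a.1)) (aeval (fun b => X b.1))
      (fun _ _ => Commute.all _ _)) ?_ ?_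
  · apply Algebra.TensorProduct.ext
    · apply MvPolynomial.algHom_ext; intro a
      simp [splitHom, Algebra.TensorProduct.lift_tmul, a.2]
    · apply MvPolynomial.algHom_ext; intro b
      simp [splitHom, Algebra.TensorProduct.lift_tmul, b.2]
  · apply MvPolynomial.algHom_ext; intro i
    by_cases h : i ∈ F <;> simp [splitHom, h, Algebra.TensorProduct.lift_tmul]

lemma splitEquiv_X_mem (F : Finset I) (i : I) (h : i ∈ F) :
    splitEquiv F (X i) = (1 : MvPolynomial {i : I // i ∉ F} ℝ) ⊗ₜ X ⟨i, h⟩ := by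
  simp [splitEquiv, splitHom, h]

lemma splitEquiv_X_not_mem (F : Finset I) (i : I) (h : i ∉ F) :
    splitEquiv F (X i) = X ⟨i, h⟩ ⊗ₜ (1 : MvPolynomial {i : I // i ∈ F} ℝ) := by
  simp [splitEquiv, splitHom, h]

lemma splitEquiv_relElem_in (F : Finset I) (I₀' : Finset {i : I // i ∈ F}) (a : I → ℝ) :
    splitEquiv F (relElem (I₀'.map (Function.Embedding.subtype _)) a) =
      Algebra.TensorProduct.includeRight (relElem I₀' (fun i => a i.1)) := by
  rw [algHom_relElem (splitEquiv F),
    algHom_relElem (Algebra.TensorProduct.includeRight :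
      MvPolynomial {i : I // i ∈ F} ℝ →ₐ[ℝ]
        (MvPolynomial {i : I // i ∉ F} ℝ ⊗[ℝ] MvPolynomial {i : I // i ∈ F} ℝ)), Finset.sum_map]
  apply Finset.sum_congr rfl
  intro i' _
  rw [← Finset.map_erase, Finset.prod_map]
  simp only [Function.Embedding.coe_subtype]
  congr 1
  apply Finset.prod_congr rfl
  intro j' _
  rw [splitEquiv_X_mem F j'.1 j'.2]
  simp [Algebra.TensorProduct.includeRight_apply]

lemma splitEquiv_relElem_out (F : Finset I) (I₀' : Finset {i : I // i ∉ F}) (a : I → ℝ) :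
    splitEquiv F (relElem (I₀'.map (Function.Embedding.subtype _)) a) =
      Algebra.TensorProduct.includeLeft (S := ℝ) (relElem I₀' (fun i => a i.1)) := by
  rw [algHom_relElem (splitEquiv F),
    algHom_relElem (Algebra.TensorProduct.includeLeft :
      MvPolynomial {i : I // i ∉ F} ℝ →ₐ[ℝ]
        (MvPolynomial {i : I // i ∉ F} ℝ ⊗[ℝ] MvPolynomial {i : I // i ∈ F} ℝ)), Finset.sum_map]
  apply Finset.sum_congr rfl
  intro i' _
  rw [← Finset.map_erase, Finset.prod_map]
  simp only [Function.Embedding.coe_subtype]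
  congr 1
  apply Finset.prod_congr rfl
  intro j' _
  rw [splitEquiv_X_not_mem F j'.1 j'.2]
  simp [Algebra.TensorProduct.includeLeft_apply]


lemma map_ideal_eq (V : Submodule ℝ (I → ℝ)) (F : Finset I) :
    Ideal.map (((splitEquiv F).toRingEquiv :
        MvPolynomial I ℝ ≃+* (MvPolynomial {i : I // i ∉ F} ℝ ⊗[ℝ] MvPolynomial {i : I // i ∈ F} ℝ)) :
        MvPolynomial I ℝ →+* (MvPolynomial {i : I // i ∉ F} ℝ ⊗[ℝ] MvPolynomial {i : I // i ∈ F} ℝ))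
      (Kloc V F ⊔ JresI V F ⊔ Qall) =
      Ideal.map (Algebra.TensorProduct.includeLeft :
        MvPolynomial {i : I // i ∉ F} ℝ →ₐ[ℝ]
          (MvPolynomial {i : I // i ∉ F} ℝ ⊗[ℝ] MvPolynomial {i : I // i ∈ F} ℝ)) (SResIdeal V F) ⊔
      Ideal.map (Algebra.TensorProduct.includeRight :
        MvPolynomial {i : I // i ∈ F} ℝ →ₐ[ℝ]
          (MvPolynomial {i : I // i ∉ F} ℝ ⊗[ℝ] MvPolynomial {i : I // i ∈ F} ℝ)) (SLocIdeal V F) := by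
  set f : MvPolynomial I ℝ →+* (MvPolynomial {i : I // i ∉ F} ℝ ⊗[ℝ] MvPolynomial {i : I // i ∈ F} ℝ) :=
    (((splitEquiv F).toRingEquiv :
        MvPolynomial I ℝ ≃+* (MvPolynomial {i : I // i ∉ F} ℝ ⊗[ℝ] MvPolynomial {i : I // i ∈ F} ℝ)) :
        MvPolynomial I ℝ →+* (MvPolynomial {i : I // i ∉ F} ℝ ⊗[ℝ] MvPolynomial {i : I // i ∈ F} ℝ)) with hf
  have hfapp : ∀ p, f p = splitEquiv F p := fun _ => rfl
  apply le_antisymm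
  · rw [Ideal.map_sup, Ideal.map_sup, sup_le_iff, sup_le_iff]
    refine ⟨⟨?_, ?_⟩, ?_⟩
    · rw [Kloc, Ideal.map_span, Ideal.span_le]
      rintro q ⟨p, ⟨I₀, a, hsub, hrel, rfl⟩, rfl⟩
      have hM : (I₀.subtype (· ∈ F)).map (Function.Embedding.subtype _) = I₀ :=
        Finset.subtype_map_of_mem (fun x hx => hsub hx)
      have himg : f (relElem I₀ a) =
          Algebra.TensorProduct.includeRight (relElem (I₀.subtype (· ∈ F)) (fun i => a i.1)) := by
        rw [hfapp]
        conv_lhs => rw [← hM]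
        exact splitEquiv_relElem_in F _ a
      rw [SetLike.mem_coe, himg]
      apply Ideal.mem_sup_right
      apply Ideal.mem_map_of_mem
      apply Ideal.subset_span
      left
      refine ⟨_, _, ?_, rfl⟩
      rw [← hM, Finset.sum_map] at hrel
      simpa using hrel
    · rw [JresI, Ideal.map_span, Ideal.span_le]
      rintro q ⟨p, ⟨I₀, a, hdisj, hrel, rfl⟩, rfl⟩
      have hM : (I₀.subtype (· ∉ F)).map (Function.Embedding.subtype _) = I₀ :=
        Finset.subtype_map_of_mem (fun x hx => Finset.disjoint_left.1 hdisj hx)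
      have himg : f (relElem I₀ a) =
          Algebra.TensorProduct.includeLeft (S := ℝ)
            (relElem (I₀.subtype (· ∉ F)) (fun i => a i.1)) := by
        rw [hfapp]
        conv_lhs => rw [← hM]
        exact splitEquiv_relElem_out F _ a
      rw [SetLike.mem_coe, himg]
      apply Ideal.mem_sup_left
      apply Ideal.mem_map_of_mem
      apply Ideal.subset_span
      left
      refine ⟨_, _, ?_, rfl⟩
      rw [← hM, Finset.sum_map] at hrel
      simpa using hrel
    · rw [Qall, Ideal.map_span, Ideal.span_le]
      rintro q ⟨p, ⟨i, rfl⟩, rfl⟩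
      rw [SetLike.mem_coe]
      by_cases h : i ∈ F
      · have himg : f ((X i : MvPolynomial I ℝ) ^ 2) =
            Algebra.TensorProduct.includeRight ((X (⟨i, h⟩ : {i : I // i ∈ F}) :
              MvPolynomial {i : I // i ∈ F} ℝ) ^ 2) := by
          rw [hfapp, map_pow, map_pow, splitEquiv_X_mem F i h,
            Algebra.TensorProduct.includeRight_apply]
        rw [himg]
        exact Ideal.mem_sup_right (Ideal.mem_map_of_mem _
          (Ideal.subset_span (Or.inr ⟨⟨i, h⟩, rfl⟩)))
      · have himg : f ((X i : MvPolynomial I ℝ) ^ 2) =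
            Algebra.TensorProduct.includeLeft (S := ℝ) ((X (⟨i, h⟩ : {i : I // i ∉ F}) :
              MvPolynomial {i : I // i ∉ F} ℝ) ^ 2) := by
          rw [hfapp, map_pow, map_pow, splitEquiv_X_not_mem F i h,
            Algebra.TensorProduct.includeLeft_apply]
        rw [himg]
        exact Ideal.mem_sup_left (Ideal.mem_map_of_mem _
          (Ideal.subset_span (Or.inr ⟨⟨i, h⟩, rfl⟩)))
  · refine sup_le ?_ ?_
    · rw [SResIdeal, Ideal.map_span, Ideal.span_le]
      rintro q ⟨p, hp, rfl⟩
      rw [SetLike.mem_coe]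
      rcases hp with ⟨I₀', a', hrel', rfl⟩ | ⟨i', rfl⟩
      · set a : I → ℝ := fun i => if h : i ∉ F then a' ⟨i, h⟩ else 0 with ha
        have ha' : (fun (i : {i : I // i ∉ F}) => a i.1) = a' := by
          funext i; simp [ha, i.2]
        have h2 : f (relElem (I₀'.map (Function.Embedding.subtype _)) a) =
            Algebra.TensorProduct.includeLeft (S := ℝ) (relElem I₀' a') := by
          rw [hfapp, splitEquiv_relElem_out, ha']
        rw [← h2]
        apply Ideal.mem_map_of_mem
        have hdisj : Disjoint (I₀'.map (Function.Embedding.subtype (fun i => i ∉ F))) F := by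
          rw [Finset.disjoint_left]
          intro x hx hxF
          rcases Finset.mem_map.1 hx with ⟨x', _, rfl⟩
          exact x'.2 hxF
        have hrel : (∑ i ∈ I₀'.map (Function.Embedding.subtype (fun i => i ∉ F)),
            a i • coordOn (V ⊓ coordKer F) i) = 0 := by
          rw [Finset.sum_map]
          have := hrel'
          rw [← ha'] at this
          simpa using this
        have hx : relElem (I₀'.map (Function.Embedding.subtype _)) a ∈ JresI V F :=
          Ideal.subset_span ⟨_, a, hdisj, hrel, rfl⟩
        exact SetLike.le_def.1 (le_sup_of_le_left le_sup_right) hx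
      · have h2 : f ((X i'.1 : MvPolynomial I ℝ) ^ 2) =
            Algebra.TensorProduct.includeLeft (S := ℝ)
              ((X i' : MvPolynomial {i : I // i ∉ F} ℝ) ^ 2) := by
          rw [hfapp, map_pow, map_pow, splitEquiv_X_not_mem F i'.1 i'.2,
            Algebra.TensorProduct.includeLeft_apply]
        rw [← h2]
        apply Ideal.mem_map_of_mem
        have hx : ((X i'.1 : MvPolynomial I ℝ) ^ 2) ∈ Qall :=
          Ideal.subset_span ⟨i'.1, rfl⟩
        exact SetLike.le_def.1 le_sup_right hx
    · rw [SLocIdeal, Ideal.map_span, Ideal.span_le]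
      rintro q ⟨p, hp, rfl⟩
      rw [SetLike.mem_coe]
      rcases hp with ⟨I₀', a', hrel', rfl⟩ | ⟨i', rfl⟩
      · set a : I → ℝ := fun i => if h : i ∈ F then a' ⟨i, h⟩ else 0 with ha
        have ha' : (fun (i : {i : I // i ∈ F}) => a i.1) = a' := by
          funext i; simp [ha, i.2]
        have h2 : f (relElem (I₀'.map (Function.Embedding.subtype _)) a) =
            Algebra.TensorProduct.includeRight (relElem I₀' a') := by
          rw [hfapp, splitEquiv_relElem_in, ha']
        rw [← h2]
        apply Ideal.mem_map_of_mem
        have hsub : (I₀'.map (Function.Embedding.subtype (fun i => i ∈ F))) ⊆ F := by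
          intro x hx
          rcases Finset.mem_map.1 hx with ⟨x', _, rfl⟩
          exact x'.2
        have hrel : (∑ i ∈ I₀'.map (Function.Embedding.subtype (fun i => i ∈ F)),
            a i • coordOn V i) = 0 := by
          rw [Finset.sum_map]
          have := hrel'
          rw [← ha'] at this
          simpa using this
        have hx : relElem (I₀'.map (Function.Embedding.subtype _)) a ∈ Kloc V F :=
          Ideal.subset_span ⟨_, a, hsub, hrel, rfl⟩
        exact SetLike.le_def.1 (le_sup_of_le_left le_sup_left) hx
      · have h2 : f ((X i'.1 : MvPolynomial I ℝ) ^ 2) =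
            Algebra.TensorProduct.includeRight
              ((X i' : MvPolynomial {i : I // i ∈ F} ℝ) ^ 2) := by
          rw [hfapp, map_pow, map_pow, splitEquiv_X_mem F i'.1 i'.2,
            Algebra.TensorProduct.includeRight_apply]
        rw [← h2]
        apply Ideal.mem_map_of_mem
        have hx : ((X i'.1 : MvPolynomial I ℝ) ^ 2) ∈ Qall :=
          Ideal.subset_span ⟨i'.1, rfl⟩
        exact SetLike.le_def.1 le_sup_right hx

set_option maxHeartbeats 4000000 in
/-- for a central arrangement and a nonempty flat `F`, there is a ring
isomorphism `ℝ[I]/(J_H + J_{H^F} + Q_I) ≅ S(H^F) ⊗_ℝ S(H_F)`. -/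
theorem stmt16 (V : Submodule ℝ (I → ℝ)) (F : Finset I)
    (hF : IsFlatC V F) (hFne : F.Nonempty) :
    Nonempty
      ((MvPolynomial I ℝ ⧸ (JH V ⊔ JresI V F ⊔ Qall)) ≃+*
        ((MvPolynomial {i : I // i ∉ F} ℝ ⧸ SResIdeal V F) ⊗[ℝ]
          (MvPolynomial {i : I // i ∈ F} ℝ ⧸ SLocIdeal V F))) := by
  have hIJ : Ideal.map (Algebra.TensorProduct.includeLeft :
        MvPolynomial {i : I // i ∉ F} ℝ →ₐ[ℝ]
          (MvPolynomial {i : I // i ∉ F} ℝ ⊗[ℝ] MvPolynomial {i : I // i ∈ F} ℝ)) (SResIdeal V F) ⊔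
      Ideal.map (Algebra.TensorProduct.includeRight :
        MvPolynomial {i : I // i ∈ F} ℝ →ₐ[ℝ]
          (MvPolynomial {i : I // i ∉ F} ℝ ⊗[ℝ] MvPolynomial {i : I // i ∈ F} ℝ)) (SLocIdeal V F) =
      Ideal.map ((splitEquiv F).toRingEquiv :
        MvPolynomial I ℝ →+* (MvPolynomial {i : I // i ∉ F} ℝ ⊗[ℝ] MvPolynomial {i : I // i ∈ F} ℝ))
        (JH V ⊔ JresI V F ⊔ Qall) := by
    rw [key_ideal_eq V F]
    exact (map_ideal_eq V F).symm
  exact ⟨(Ideal.quotientEquiv _ _ (splitEquiv F).toRingEquiv hIJ).trans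
    (quotTensorQuot (SResIdeal V F) (SLocIdeal V F)).toRingEquiv⟩
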